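/- Let g be a finite dimensional unital associative algebra with non-degenerate trace form Tr and dual bases {u_i},{u^i}. For k ≥ 1 define C_k = (1/k)∑_{i₁,…,i_k} u_{i₁}⋯u_{i_k} Tr(u^{i₁}⋯u^{i_k}) ∈ S(g). Then C_k is a Casimir of g: ∑_i (∂C_k/∂u_i)[x,u_i] = 0 for all x ∈ g. -/

import Mathlib

open MvPolynomial Finset
open Fin.CommRing Fin.NatCast

private lemma fin1 (m : ℕ) (c : Fin (m+1)) : c + 1 + Fin.last m = c := by
  rw [add_assoc]
  have h1 : (1 : Fin (m+1)) + Fin.last m = 0 := by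
    rw [add_comm 1 (Fin.last m)]; exact Fin.last_add_one _
  rw [h1, add_zero]

private lemma fin2 (m : ℕ) (c : Fin (m+1)) (t : Fin m) :
    c + 1 + Fin.castSucc t = c + Fin.succ t := by
  rw [add_assoc, ← Fin.coeSucc_eq_succ]
  ring

private lemma fin3 (m : ℕ) (s : Fin (m+1)) (t : Fin m) : s + Fin.succ t ≠ s := by
  intro h
  have h2 : Fin.succ t = 0 := by
    have := congrArg (fun z => -s + z) h
    simpa [← add_assoc] using this
  exact (Fin.succ_ne_zero t) h2

private def Pw {g : Type*} [Monoid g] {ι : Type*} (v : ι → g) {n : ℕ} (f : Fin n → ι) : g :=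
  (List.ofFn fun t => v (f t)).prod

private lemma Pw_succ_left {g : Type*} [Monoid g] {ι : Type*} (v : ι → g) {m : ℕ}
    (f : Fin (m+1) → ι) (c : Fin (m+1)) :
    Pw v (fun t => f (c + t)) = v (f c) * Pw v (fun t : Fin m => f (c + t.succ)) := by
  simp [Pw, List.ofFn_succ]

private lemma Pw_succ_right {g : Type*} [Monoid g] {ι : Type*} (v : ι → g) {m : ℕ}
    (f : Fin (m+1) → ι) (c : Fin (m+1)) :
    Pw v (fun t => f (c + 1 + t)) = Pw v (fun t : Fin m => f (c + t.succ)) * v (f c) := by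
  unfold Pw
  rw [List.ofFn_succ']
  simp only [List.concat_eq_append, List.prod_append, List.prod_cons, List.prod_nil, mul_one]
  rw [fin1]
  have h2 : (fun i : Fin m => v (f (c + 1 + i.castSucc))) = fun i : Fin m => v (f (c + i.succ)) :=
    funext fun t => by rw [fin2]
  rw [h2]

private lemma pderiv_prod_X {F : Type*} [CommRing F] {ι : Type*} [DecidableEq ι]
    {κ : Type*} [DecidableEq κ] (u : Finset κ) (f : κ → ι) (i : ι) :
    MvPolynomial.pderiv i (∏ t ∈ u, MvPolynomial.X (f t) : MvPolynomial ι F) =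
      ∑ s ∈ u, if f s = i then ∏ t ∈ u.erase s, MvPolynomial.X (f t) else 0 := by
  classical
  induction u using Finset.induction_on with
  | empty => simp [MvPolynomial.pderiv_one]
  | @insert a u ha ih =>
    have hX : MvPolynomial.pderiv i (MvPolynomial.X (f a) : MvPolynomial ι F)
        = if f a = i then 1 else 0 := by
      rcases eq_or_ne (f a) i with h | h
      · simp [h]
      · simp [MvPolynomial.pderiv_X_of_ne h, h]
    rw [Finset.prod_insert ha, MvPolynomial.pderiv_mul, ih, Finset.sum_insert ha,
      Finset.erase_insert ha, hX, Finset.mul_sum]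
    congr 1
    · split <;> simp
    · refine Finset.sum_congr rfl fun s hs => ?_
      rw [mul_ite, mul_zero]
      rcases eq_or_ne (f s) i with h | h
      · rw [if_pos h, if_pos h,
          Finset.erase_insert_of_ne (by rintro rfl; exact ha hs),
          Finset.prod_insert (fun hmem => ha (Finset.mem_of_mem_erase hmem))]
      · rw [if_neg h, if_neg h]

/-- The elements `C_k = (1/k) ∑_{i₁,…,i_k} u_{i₁} ⋯ u_{i_k} Tr (u^{i₁} ⋯ u^{i_k})`
of the symmetric algebra (realized as `MvPolynomial ι F`, with `u_i = b i` corresponding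
to `X i` and dual basis `u^i = v i`) are Casimirs:
`∑_i (∂C_k/∂u_i) [x, u_i] = 0` for all `x`. -/
theorem stmt_14 {F : Type*} [Field F] [CharZero F]
    {g : Type*} [Ring g] [Algebra F g] [FiniteDimensional F g]
    {ι : Type*} [Fintype ι] [DecidableEq ι]
    (b : Module.Basis ι F g) (v : ι → g)
    (Tr : g →ₗ[F] F)
    (hTrc : ∀ p q : g, Tr (p * q - q * p) = 0)
    (hTrnd : ∀ p : g, (∀ q : g, Tr (p * q) = 0) → p = 0)
    (hdual : ∀ i j, Tr (b i * v j) = if i = j then (1 : F) else 0)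
    (ℓ : g →ₗ[F] MvPolynomial ι F)
    (hℓ : ∀ i, ℓ (b i) = MvPolynomial.X i)
    (k : ℕ) (hk : 1 ≤ k)
    (Ck : MvPolynomial ι F)
    (hCk : Ck = ((k : F)⁻¹) •
      ∑ f : Fin k → ι,
        (∏ t, MvPolynomial.X (f t)) *
          MvPolynomial.C (Tr ((List.ofFn fun t => v (f t)).prod))) :
    ∀ x : g, ∑ i, MvPolynomial.pderiv i Ck * ℓ (x * b i - b i * x) = 0 := by
  classical
  intro x
  obtain ⟨m, rfl⟩ : ∃ m, k = m + 1 := ⟨k - 1, (Nat.succ_pred_eq_of_pos hk).symm⟩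
  subst hCk
  -- trace is symmetric
  have htr : ∀ p q : g, Tr (p * q) = Tr (q * p) := by
    intro p q
    have h := hTrc p q
    rw [map_sub, sub_eq_zero] at h
    exact h
  -- dual-basis coefficient extraction
  have hcoef : ∀ (p : g) (i : ι), Tr (p * v i) = b.repr p i := by
    intro p i
    conv_lhs => rw [← b.sum_repr p]
    rw [Finset.sum_mul, map_sum]
    simp [smul_mul_assoc, hdual, Finset.sum_ite_eq']
  have hexp : ∀ p : g, ∑ i, Tr (p * v i) • b i = p := by
    intro p
    conv_rhs => rw [← b.sum_repr p]
    exact Finset.sum_congr rfl fun i _ => by rw [hcoef]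
  have hlexp : ∀ p : g, ℓ p = ∑ j, Tr (p * v j) • (X j : MvPolynomial ι F) := by
    intro p
    conv_lhs => rw [← hexp p]
    rw [map_sum]
    exact Finset.sum_congr rfl fun j _ => by rw [map_smul, hℓ]
  -- the trace of a cyclically rotated product is unchanged
  have hTrrot : ∀ (f : Fin (m+1) → ι) (c : Fin (m+1)),
      Tr (Pw v fun t => f (c + t)) = Tr (Pw v f) := by
    intro f c
    have hstep : ∀ c : Fin (m+1),
        Tr (Pw v fun t => f (c + 1 + t)) = Tr (Pw v fun t => f (c + t)) := by
      intro c
      rw [Pw_succ_right, Pw_succ_left, htr]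
    have hnat : ∀ n : ℕ, Tr (Pw v fun t => f ((n : Fin (m+1)) + t)) = Tr (Pw v f) := by
      intro n
      induction n with
      | zero => simp
      | succ n ih =>
        have hc : ((n + 1 : ℕ) : Fin (m+1)) = (n : Fin (m+1)) + 1 := by push_cast; ring
        rw [hc, hstep, ih]
    calc Tr (Pw v fun t => f (c + t))
        = Tr (Pw v fun t => f (((c.val : ℕ) : Fin (m+1)) + t)) := by
          rw [Fin.cast_val_eq_self]
      _ = Tr (Pw v f) := hnat c.val
  -- rotation invariance of the full sum
  have hrotS : ∀ c : Fin (m+1),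
      ∑ f : Fin (m+1) → ι,
          (∏ t, (X (f t) : MvPolynomial ι F)) * C (Tr (x * Pw v fun t => f (c + t)))
        = ∑ f : Fin (m+1) → ι,
          (∏ t, (X (f t) : MvPolynomial ι F)) * C (Tr (x * Pw v f)) := by
    intro c
    have hbij : Function.Bijective
        (fun (f : Fin (m+1) → ι) => (fun t => f (c + t) : Fin (m+1) → ι)) := by
      constructor
      · intro f1 f2 h
        funext t
        have := congrFun h (-c + t)
        simpa [add_neg_cancel_left] using this
      · intro f
        exact ⟨fun t => f (-c + t), by funext t; simp [neg_add_cancel_left]⟩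
    refine Fintype.sum_bijective _ hbij _ _ ?_
    intro f
    congr 1
    exact (Equiv.prod_comp (Equiv.addLeft c) fun u => (X (f u) : MvPolynomial ι F)).symm
  -- rewrite the Casimir in terms of `Pw`
  have hgoal : (∑ f : Fin (m+1) → ι,
        (∏ t, (X (f t) : MvPolynomial ι F)) * C (Tr ((List.ofFn fun t => v (f t)).prod)))
      = ∑ f : Fin (m+1) → ι, (∏ t, (X (f t) : MvPolynomial ι F)) * C (Tr (Pw v f)) := rfl
  rw [hgoal, smul_eq_C_mul]
  simp only [pderiv_C_mul, mul_assoc]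
  rw [← Finset.mul_sum]
  refine mul_eq_zero_of_right _ ?_
  -- differentiate the monomials
  simp only [map_sum, MvPolynomial.pderiv_mul, MvPolynomial.pderiv_C, mul_zero, add_zero,
    pderiv_prod_X]
  simp only [Finset.sum_mul, ite_mul, zero_mul]
  rw [Finset.sum_comm]
  have hswap : ∀ f : Fin (m+1) → ι,
      (∑ i : ι, ∑ s : Fin (m+1),
        if f s = i then (∏ t ∈ Finset.univ.erase s, (X (f t) : MvPolynomial ι F)) *
          C (Tr (Pw v f)) * ℓ (x * b i - b i * x) else 0)
      = ∑ s : Fin (m+1), (∏ t ∈ Finset.univ.erase s, (X (f t) : MvPolynomial ι F)) *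
          C (Tr (Pw v f)) * ℓ (x * b (f s) - b (f s) * x) := by
    intro f
    rw [Finset.sum_comm]
    simp [Finset.sum_ite_eq]
  rw [Finset.sum_congr rfl fun f _ => hswap f]
  rw [Finset.sum_comm]
  refine Finset.sum_eq_zero fun s _ => ?_
  -- now work with a fixed slot `s`
  calc
    (∑ f : Fin (m+1) → ι, (∏ t ∈ Finset.univ.erase s, (X (f t) : MvPolynomial ι F)) *
          C (Tr (Pw v f)) * ℓ (x * b (f s) - b (f s) * x))
      = ∑ f : Fin (m+1) → ι, ∑ j : ι,
          (∏ t ∈ Finset.univ.erase s, (X (f t) : MvPolynomial ι F)) *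
            (C (Tr (Pw v f)) *
              (C (Tr ((x * b (f s) - b (f s) * x) * v j)) * X j)) := by
        refine Finset.sum_congr rfl fun f _ => ?_
        rw [hlexp (x * b (f s) - b (f s) * x), Finset.mul_sum]
        refine Finset.sum_congr rfl fun j _ => ?_
        rw [smul_eq_C_mul]
        ring
    _ = ∑ p : (Fin (m+1) → ι) × ι,
          (∏ t ∈ Finset.univ.erase s, (X (p.1 t) : MvPolynomial ι F)) *
            (C (Tr (Pw v p.1)) *
              (C (Tr ((x * b (p.1 s) - b (p.1 s) * x) * v p.2)) * X p.2)) := by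
        rw [← Finset.univ_product_univ, Finset.sum_product]
    _ = ∑ p : (Fin (m+1) → ι) × ι,
          (∏ t ∈ Finset.univ.erase s,
              (X ((Function.update p.1 s p.2) t) : MvPolynomial ι F)) *
            (C (Tr (Pw v (Function.update p.1 s p.2))) *
              (C (Tr ((x * b ((Function.update p.1 s p.2) s) -
                  b ((Function.update p.1 s p.2) s) * x) * v (p.1 s))) *
                X (p.1 s))) := by
        have hE : Function.Bijective
            (fun p : (Fin (m+1) → ι) × ι => (Function.update p.1 s p.2, p.1 s)) := by
          apply Function.Involutive.bijective
          rintro ⟨f, j⟩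
          simp [Function.update_idem, Function.update_self, Function.update_eq_self,
            Prod.ext_iff]
        exact (Function.Bijective.sum_comp hE _).symm
    _ = ∑ f : Fin (m+1) → ι, ∑ i : ι,
          ((∏ t ∈ Finset.univ.erase s, (X (f t) : MvPolynomial ι F)) * X (f s)) *
            C (Tr (Pw v (Function.update f s i)) *
                Tr ((x * b i - b i * x) * v (f s))) := by
        rw [← Finset.univ_product_univ, Finset.sum_product]
        refine Finset.sum_congr rfl fun f _ => Finset.sum_congr rfl fun i _ => ?_
        simp only [Function.update_self]
        have hrest : (∏ t ∈ Finset.univ.erase s,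
            (X ((Function.update f s i) t) : MvPolynomial ι F))
            = ∏ t ∈ Finset.univ.erase s, (X (f t) : MvPolynomial ι F) :=
          Finset.prod_congr rfl fun t ht => by
            rw [Function.update_of_ne (Finset.ne_of_mem_erase ht)]
        rw [hrest, MvPolynomial.C_mul]
        ring
    _ = ∑ f : Fin (m+1) → ι,
          ((∏ t ∈ Finset.univ.erase s, (X (f t) : MvPolynomial ι F)) * X (f s)) *
            C (∑ i : ι, Tr (Pw v (Function.update f s i)) *
                Tr ((x * b i - b i * x) * v (f s))) := by
        refine Finset.sum_congr rfl fun f _ => ?_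
        rw [map_sum, Finset.mul_sum]
    _ = ∑ f : Fin (m+1) → ι,
          (∏ t, (X (f t) : MvPolynomial ι F)) *
            C (Tr (x * Pw v fun t => f (s + 1 + t)) -
                Tr (x * Pw v fun t => f (s + t))) := by
        refine Finset.sum_congr rfl fun f _ => ?_
        rw [Finset.prod_erase_mul _ _ (Finset.mem_univ s)]
        congr 2
        -- the scalar identity
        have hup : ∀ i : ι, Tr (Pw v (Function.update f s i))
            = Tr ((Pw v fun t : Fin m => f (s + t.succ)) * v i) := by
          intro i
          rw [← hTrrot (Function.update f s i) s, Pw_succ_left, Function.update_self]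
          have hfun : (fun t : Fin m => Function.update f s i (s + t.succ))
              = fun t : Fin m => f (s + t.succ) :=
            funext fun t => by rw [Function.update_of_ne (fin3 m s t)]
          rw [hfun, htr]
        simp only [hup]
        have hlin : ∀ i : ι,
            Tr ((Pw v fun t : Fin m => f (s + t.succ)) * v i) *
              Tr ((x * b i - b i * x) * v (f s))
            = Tr ((x * (Tr ((Pw v fun t : Fin m => f (s + t.succ)) * v i) • b i) -
                (Tr ((Pw v fun t : Fin m => f (s + t.succ)) * v i) • b i) * x) * v (f s)) := by
          intro i
          rw [mul_smul_comm, smul_mul_assoc, ← smul_sub, smul_mul_assoc, map_smul,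
            smul_eq_mul]
        rw [Finset.sum_congr rfl fun i _ => hlin i, ← map_sum]
        have hsum : (∑ i : ι,
            ((x * (Tr ((Pw v fun t : Fin m => f (s + t.succ)) * v i) • b i) -
              (Tr ((Pw v fun t : Fin m => f (s + t.succ)) * v i) • b i) * x) * v (f s)))
            = (x * (Pw v fun t : Fin m => f (s + t.succ)) -
                (Pw v fun t : Fin m => f (s + t.succ)) * x) * v (f s) := by
          rw [← Finset.sum_mul]
          congr 1
          rw [Finset.sum_sub_distrib]
          congr 1
          · rw [← Finset.mul_sum, hexp]
          · rw [← Finset.sum_mul, hexp]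
        rw [hsum, sub_mul, map_sub]
        congr 1
        · rw [mul_assoc, ← Pw_succ_right]
        · calc Tr ((Pw v fun t : Fin m => f (s + t.succ)) * x * v (f s))
              = Tr (v (f s) * ((Pw v fun t : Fin m => f (s + t.succ)) * x)) := by
                rw [htr]
            _ = Tr ((v (f s) * (Pw v fun t : Fin m => f (s + t.succ))) * x) := by
                rw [mul_assoc]
            _ = Tr ((Pw v fun t => f (s + t)) * x) := by rw [← Pw_succ_left]
            _ = Tr (x * Pw v fun t => f (s + t)) := by rw [htr]
    _ = 0 := by
        simp only [map_sub, mul_sub]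
        rw [Finset.sum_sub_distrib, hrotS (s + 1), hrotS s, sub_self]
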